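/- For λ ∈ ℂ \ {0, 1}, let π_λ be the representation of the primitive poset (2,2,2) in V = ℂ³ with basis e₁, e₂, e₃ given by the three chains of subspaces V₁ = span{e₁} ⊆ V₂ = span{e₁, e₂}; V₃ = span{e₃} ⊆ V₄ = span{e₂, e₃}; V₅ = span{e₁+e₂+e₃} ⊆ V₆ = span{e₁+e₂+e₃, λe₁+e₂}. Then each π_λ is indecomposable, and for λ ≠ μ (both in ℂ \ {0,1}) the representations π_λ and π_μ are not isomorphic; in particular the poset (2,2,2) has infinitely many pairwise non-isomorphic indecomposable representations. -/

import Mathlib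

noncomputable section

/-- A system of subspaces `A : ι → Submodule ℂ V` is decomposable if the ambient space
splits as a direct sum of two nonzero subspaces compatible with every member of the system
(internal reformulation of being isomorphic to a direct sum of two representations with
nonzero ambient spaces). -/
def IsDecomposableSystem {ι V : Type*} [AddCommGroup V] [Module ℂ V]
    (A : ι → Submodule ℂ V) : Prop :=
  ∃ U W : Submodule ℂ V, IsCompl U W ∧ U ≠ ⊥ ∧ W ≠ ⊥ ∧
    ∀ i, A i = A i ⊓ U ⊔ A i ⊓ W

/-- A system of subspaces is indecomposable if the ambient space is nonzero and the system
is not decomposable. -/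
def IsIndecomposableSystem {ι V : Type*} [AddCommGroup V] [Module ℂ V]
    (A : ι → Submodule ℂ V) : Prop :=
  (∃ v : V, v ≠ 0) ∧ ¬ IsDecomposableSystem A

/-- Two systems of subspaces are isomorphic if there is an invertible linear map carrying
each member of the first system onto the corresponding member of the second. -/
def RepIso {ι V W : Type*} [AddCommGroup V] [Module ℂ V] [AddCommGroup W] [Module ℂ W]
    (A : ι → Submodule ℂ V) (B : ι → Submodule ℂ W) : Prop :=
  ∃ C : V ≃ₗ[ℂ] W, ∀ i, (A i).map (C : V →ₗ[ℂ] W) = B i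

/-- The representation `π_λ` of the primitive poset `(2,2,2)` in `ℂ³`:
the chains `V₁ = span{e₁} ⊆ V₂ = span{e₁,e₂}`, `V₃ = span{e₃} ⊆ V₄ = span{e₂,e₃}`,
`V₅ = span{e₁+e₂+e₃} ⊆ V₆ = span{e₁+e₂+e₃, λe₁+e₂}` (indices `0,…,5` for `V₁,…,V₆`). -/
def piRep (lam : ℂ) : Fin 6 → Submodule ℂ (Fin 3 → ℂ) :=
  ![Submodule.span ℂ {![1, 0, 0]},
    Submodule.span ℂ {![1, 0, 0], ![0, 1, 0]},
    Submodule.span ℂ {![0, 0, 1]},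
    Submodule.span ℂ {![0, 1, 0], ![0, 0, 1]},
    Submodule.span ℂ {![1, 1, 1]},
    Submodule.span ℂ {![1, 1, 1], ![lam, 1, 0]}]

section Aux

open Submodule

private lemma vsum : (![1,1,1] : Fin 3 → ℂ) = ![1,0,0] + ![0,1,0] + ![0,0,1] := by
  funext i; fin_cases i <;> norm_num

private lemma mem_L1 {x : Fin 3 → ℂ} :
    x ∈ Submodule.span ℂ {![1,0,0]} ↔ x 1 = 0 ∧ x 2 = 0 := by
  rw [Submodule.mem_span_singleton]
  constructor
  · rintro ⟨c, rfl⟩; simp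
  · rintro ⟨h1, h2⟩; exact ⟨x 0, by funext i; fin_cases i <;> simp [h1, h2]⟩

private lemma mem_L2 {x : Fin 3 → ℂ} :
    x ∈ Submodule.span ℂ {![1,0,0], ![0,1,0]} ↔ x 2 = 0 := by
  rw [Submodule.mem_span_pair]
  constructor
  · rintro ⟨m, n, rfl⟩; simp
  · intro h; exact ⟨x 0, x 1, by funext i; fin_cases i <;> simp [h]⟩

private lemma mem_L3 {x : Fin 3 → ℂ} :
    x ∈ Submodule.span ℂ {![0,0,1]} ↔ x 0 = 0 ∧ x 1 = 0 := by
  rw [Submodule.mem_span_singleton]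
  constructor
  · rintro ⟨c, rfl⟩; simp
  · rintro ⟨h1, h2⟩; exact ⟨x 2, by funext i; fin_cases i <;> simp [h1, h2]⟩

private lemma mem_L4 {x : Fin 3 → ℂ} :
    x ∈ Submodule.span ℂ {![0,1,0], ![0,0,1]} ↔ x 0 = 0 := by
  rw [Submodule.mem_span_pair]
  constructor
  · rintro ⟨m, n, rfl⟩; simp
  · intro h; exact ⟨x 1, x 2, by funext i; fin_cases i <;> simp [h]⟩

private lemma mem_L5 {x : Fin 3 → ℂ} :
    x ∈ Submodule.span ℂ {![1,1,1]} ↔ x 1 = x 0 ∧ x 2 = x 0 := by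
  rw [Submodule.mem_span_singleton]
  constructor
  · rintro ⟨c, rfl⟩; simp
  · rintro ⟨h1, h2⟩; exact ⟨x 0, by funext i; fin_cases i <;> simp [h1, h2]⟩

private lemma mem_L6 {lam : ℂ} {x : Fin 3 → ℂ} :
    x ∈ Submodule.span ℂ {![1,1,1], ![lam,1,0]} ↔ x 0 = lam * x 1 + (1 - lam) * x 2 := by
  rw [Submodule.mem_span_pair]
  constructor
  · rintro ⟨m, n, rfl⟩; simp; ring
  · intro h
    refine ⟨x 2, x 1 - x 2, ?_⟩
    funext i; fin_cases i <;> simp [h] <;> ring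

private lemma line_cases {U W : Submodule ℂ (Fin 3 → ℂ)} {a : Fin 3 → ℂ}
    (h : Submodule.span ℂ {a} = Submodule.span ℂ {a} ⊓ U ⊔ Submodule.span ℂ {a} ⊓ W) :
    a ∈ U ∨ a ∈ W := by
  have ha : a ∈ Submodule.span ℂ {a} := Submodule.mem_span_singleton_self a
  rw [h, Submodule.mem_sup] at ha
  obtain ⟨u, hu, w, hw, huw⟩ := ha
  obtain ⟨c, hc⟩ := Submodule.mem_span_singleton.mp hu.1
  by_cases hc0 : c = 0
  · right
    have hwa : w = a := by
      have : u = 0 := by rw [← hc, hc0, zero_smul]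
      rw [this, zero_add] at huw; exact huw
    exact hwa ▸ hw.2
  · left
    have : a = c⁻¹ • u := by rw [← hc, smul_smul, inv_mul_cancel₀ hc0, one_smul]
    exact this ▸ U.smul_mem _ hu.2

/-- all three lines in `U` forces `W = ⊥`. -/
private lemma case_all {U W : Submodule ℂ (Fin 3 → ℂ)} (disj : U ⊓ W = ⊥)
    (h1 : ![1,0,0] ∈ U) (h3 : ![0,0,1] ∈ U) (hv : ![1,1,1] ∈ U) : W = ⊥ := by
  have h2 : (![0,1,0] : Fin 3 → ℂ) ∈ U := by
    have : (![0,1,0] : Fin 3 → ℂ) = ![1,1,1] - ![1,0,0] - ![0,0,1] := by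
      funext i; fin_cases i <;> norm_num
    rw [this]; exact U.sub_mem (U.sub_mem hv h1) h3
  have hU : U = ⊤ := by
    rw [eq_top_iff]
    intro x _
    have : x = x 0 • ![1,0,0] + x 1 • ![0,1,0] + x 2 • ![0,0,1] := by
      funext i; fin_cases i <;> simp
    rw [this]
    exact U.add_mem (U.add_mem (U.smul_mem _ h1) (U.smul_mem _ h2)) (U.smul_mem _ h3)
  rw [← disj, hU, top_inf_eq]

/-- `e₁, e₃ ∈ U`, `v ∈ W` contradicts the splitting of `L₂`. -/
private lemma case_A {U W : Submodule ℂ (Fin 3 → ℂ)} (disj : U ⊓ W = ⊥)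
    (split2 : Submodule.span ℂ {![1,0,0], ![0,1,0]} =
      Submodule.span ℂ {![1,0,0], ![0,1,0]} ⊓ U ⊔ Submodule.span ℂ {![1,0,0], ![0,1,0]} ⊓ W)
    (h1 : ![1,0,0] ∈ U) (h3 : ![0,0,1] ∈ U) (hv : ![1,1,1] ∈ W) : False := by
  have he2 : (![0,1,0] : Fin 3 → ℂ) ∈ Submodule.span ℂ {![1,0,0], ![0,1,0]} := by
    rw [mem_L2]; rfl
  rw [split2, Submodule.mem_sup] at he2
  obtain ⟨u, hu, w, hw, huw⟩ := he2
  have key : w - ![1,1,1] = 0 := by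
    have hwU : w - ![1,1,1] ∈ U := by
      have hweq : w - ![1,1,1] = -(![1,0,0] + ![0,0,1] + u) := by
        have : w = ![0,1,0] - u := by rw [← huw]; abel
        rw [this]; funext i; fin_cases i <;> simp [Matrix.vecHead, Matrix.vecTail] <;> ring
      rw [hweq]
      exact U.neg_mem (U.add_mem (U.add_mem h1 h3) hu.2)
    have hwW : w - ![1,1,1] ∈ W := W.sub_mem hw.2 hv
    have : w - ![1,1,1] ∈ U ⊓ W := ⟨hwU, hwW⟩
    rw [disj] at this; exact this
  have hwv : w = ![1,1,1] := by
    have := sub_eq_zero.mp key; exact this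
  have := mem_L2.mp hw.1
  rw [hwv] at this; simp at this

/-- `e₁, v ∈ U`, `e₃ ∈ W` contradicts the splitting of `L₂`. -/
private lemma case_B {U W : Submodule ℂ (Fin 3 → ℂ)} (disj : U ⊓ W = ⊥)
    (split2 : Submodule.span ℂ {![1,0,0], ![0,1,0]} =
      Submodule.span ℂ {![1,0,0], ![0,1,0]} ⊓ U ⊔ Submodule.span ℂ {![1,0,0], ![0,1,0]} ⊓ W)
    (h1 : ![1,0,0] ∈ U) (hv : ![1,1,1] ∈ U) (h3 : ![0,0,1] ∈ W) : False := by
  have he2 : (![0,1,0] : Fin 3 → ℂ) ∈ Submodule.span ℂ {![1,0,0], ![0,1,0]} := by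
    rw [mem_L2]; rfl
  rw [split2, Submodule.mem_sup] at he2
  obtain ⟨u, hu, w, hw, huw⟩ := he2
  have key : w + ![0,0,1] = 0 := by
    have hwU : w + ![0,0,1] ∈ U := by
      have hweq : w + ![0,0,1] = ![1,1,1] - ![1,0,0] - u := by
        have : w = ![0,1,0] - u := by rw [← huw]; abel
        rw [this]; funext i; fin_cases i <;> simp [Matrix.vecHead, Matrix.vecTail] <;> ring
      rw [hweq]
      exact U.sub_mem (U.sub_mem hv h1) hu.2
    have hwW : w + ![0,0,1] ∈ W := W.add_mem hw.2 h3
    have : w + ![0,0,1] ∈ U ⊓ W := ⟨hwU, hwW⟩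
    rw [disj] at this; exact this
  have := mem_L2.mp hw.1
  have h2 := congrFun key 2
  simp [this] at h2

/-- `e₃, v ∈ U`, `e₁ ∈ W` contradicts the splitting of `L₄`. -/
private lemma case_C {U W : Submodule ℂ (Fin 3 → ℂ)} (disj : U ⊓ W = ⊥)
    (split4 : Submodule.span ℂ {![0,1,0], ![0,0,1]} =
      Submodule.span ℂ {![0,1,0], ![0,0,1]} ⊓ U ⊔ Submodule.span ℂ {![0,1,0], ![0,0,1]} ⊓ W)
    (h3 : ![0,0,1] ∈ U) (hv : ![1,1,1] ∈ U) (h1 : ![1,0,0] ∈ W) : False := by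
  have he2 : (![0,1,0] : Fin 3 → ℂ) ∈ Submodule.span ℂ {![0,1,0], ![0,0,1]} := by
    rw [mem_L4]; norm_num
  rw [split4, Submodule.mem_sup] at he2
  obtain ⟨u, hu, w, hw, huw⟩ := he2
  have key : w + ![1,0,0] = 0 := by
    have hwU : w + ![1,0,0] ∈ U := by
      have hweq : w + ![1,0,0] = ![1,1,1] - ![0,0,1] - u := by
        have : w = ![0,1,0] - u := by rw [← huw]; abel
        rw [this]; funext i; fin_cases i <;> simp [Matrix.vecHead, Matrix.vecTail] <;> ring
      rw [hweq]
      exact U.sub_mem (U.sub_mem hv h3) hu.2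
    have hwW : w + ![1,0,0] ∈ W := W.add_mem hw.2 h1
    have : w + ![1,0,0] ∈ U ⊓ W := ⟨hwU, hwW⟩
    rw [disj] at this; exact this
  have := mem_L4.mp hw.1
  have h0 := congrFun key 0
  simp [this] at h0

private lemma piRep_indec (lam : ℂ) : IsIndecomposableSystem (piRep lam) := by
  constructor
  · exact ⟨![1,0,0], by
      intro h
      have := congrFun h 0
      simp at this⟩
  · rintro ⟨U, W, hcompl, hU, hW, hsplit⟩
    have disj : U ⊓ W = ⊥ := hcompl.inf_eq_bot
    have disj' : W ⊓ U = ⊥ := by rw [inf_comm]; exact disj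
    have h0 : Submodule.span ℂ {![1,0,0]} =
        Submodule.span ℂ {![1,0,0]} ⊓ U ⊔ Submodule.span ℂ {![1,0,0]} ⊓ W := hsplit 0
    have h2 : Submodule.span ℂ {![0,0,1]} =
        Submodule.span ℂ {![0,0,1]} ⊓ U ⊔ Submodule.span ℂ {![0,0,1]} ⊓ W := hsplit 2
    have h4 : Submodule.span ℂ {![1,1,1]} =
        Submodule.span ℂ {![1,1,1]} ⊓ U ⊔ Submodule.span ℂ {![1,1,1]} ⊓ W := hsplit 4
    have s2 : Submodule.span ℂ {![1,0,0], ![0,1,0]} =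
        Submodule.span ℂ {![1,0,0], ![0,1,0]} ⊓ U ⊔
        Submodule.span ℂ {![1,0,0], ![0,1,0]} ⊓ W := hsplit 1
    have s4 : Submodule.span ℂ {![0,1,0], ![0,0,1]} =
        Submodule.span ℂ {![0,1,0], ![0,0,1]} ⊓ U ⊔
        Submodule.span ℂ {![0,1,0], ![0,0,1]} ⊓ W := hsplit 3
    have s2' : Submodule.span ℂ {![1,0,0], ![0,1,0]} =
        Submodule.span ℂ {![1,0,0], ![0,1,0]} ⊓ W ⊔
        Submodule.span ℂ {![1,0,0], ![0,1,0]} ⊓ U := by rw [sup_comm]; exact s2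
    have s4' : Submodule.span ℂ {![0,1,0], ![0,0,1]} =
        Submodule.span ℂ {![0,1,0], ![0,0,1]} ⊓ W ⊔
        Submodule.span ℂ {![0,1,0], ![0,0,1]} ⊓ U := by rw [sup_comm]; exact s4
    rcases line_cases h0 with m1 | m1 <;> rcases line_cases h2 with m3 | m3 <;>
      rcases line_cases h4 with mv | mv
    · exact hW (case_all disj m1 m3 mv)
    · exact case_A disj s2 m1 m3 mv
    · exact case_B disj s2 m1 mv m3
    · exact case_C disj' s4' m3 mv m1
    · exact case_C disj s4 m3 mv m1
    · exact case_B disj' s2' m1 mv m3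
    · exact case_A disj' s2' m1 m3 mv
    · exact hU (case_all disj' m1 m3 mv)

private lemma piRep_noniso {lam mu : ℂ} (hne : lam ≠ mu) :
    ¬ RepIso (piRep lam) (piRep mu) := by
  rintro ⟨C, hC⟩
  have hmap : ∀ (i : Fin 6) (x : Fin 3 → ℂ), x ∈ piRep lam i → C x ∈ piRep mu i := by
    intro i x hx
    rw [← hC i]
    exact Submodule.mem_map_of_mem hx
  -- C e1 = a • e1
  have hCe1 : C ![1,0,0] ∈ Submodule.span ℂ {![(1:ℂ),0,0]} :=
    hmap 0 _ (Submodule.mem_span_singleton_self _)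
  have hCe3 : C ![0,0,1] ∈ Submodule.span ℂ {![(0:ℂ),0,1]} :=
    hmap 2 _ (Submodule.mem_span_singleton_self _)
  have hCv : C ![1,1,1] ∈ Submodule.span ℂ {![(1:ℂ),1,1]} :=
    hmap 4 _ (Submodule.mem_span_singleton_self _)
  have hCe2a : C ![0,1,0] ∈ Submodule.span ℂ {![(1:ℂ),0,0], ![0,1,0]} :=
    hmap 1 _ (by
      show (![0,1,0] : Fin 3 → ℂ) ∈ Submodule.span ℂ {![(1:ℂ),0,0], ![0,1,0]}
      rw [mem_L2]; rfl)
  have hCe2b : C ![0,1,0] ∈ Submodule.span ℂ {![(0:ℂ),1,0], ![0,0,1]} :=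
    hmap 3 _ (by
      show (![0,1,0] : Fin 3 → ℂ) ∈ Submodule.span ℂ {![(0:ℂ),1,0], ![0,0,1]}
      rw [mem_L4]; norm_num)
  have he1 := mem_L1.mp hCe1
  have he3 := mem_L3.mp hCe3
  have hv := mem_L5.mp hCv
  have he2c := mem_L2.mp hCe2a
  have he2a := mem_L4.mp hCe2b
  set a := C ![1,0,0] 0 with ha
  -- C v = C e1 + C e2 + C e3
  have hsum : C ![1,1,1] = C ![1,0,0] + C ![0,1,0] + C ![0,0,1] := by
    rw [← map_add, ← map_add, ← vsum]
  -- coordinates of C e2 : (0, b, 0); of C v : (d,d,d)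
  have hb1 : C ![1,1,1] 1 = C ![0,1,0] 1 := by
    rw [hsum]; simp [he1.1, he3.2]
  have hb0 : C ![1,1,1] 0 = C ![1,0,0] 0 := by
    rw [hsum]; simp [he2a, he3.1]
  have hab : C ![0,1,0] 1 = a := by
    rw [← hb1, hv.1, hb0]
  have hane : a ≠ 0 := by
    intro h0
    have : C ![1,0,0] = 0 := by
      funext i; fin_cases i
      · exact h0
      · exact he1.1
      · exact he1.2
    have : (![1,0,0] : Fin 3 → ℂ) = 0 := by
      apply C.injective; rw [this, map_zero]
    have := congrFun this 0
    simp at this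
  -- C (lam e1 + e2) = a • (lam e1 + e2) ∈ L6 mu
  have hw6 : C (![lam,1,0]) ∈ Submodule.span ℂ {![(1:ℂ),1,1], ![mu,1,0]} :=
    hmap 5 _ (by
      show (![lam,1,0] : Fin 3 → ℂ) ∈ Submodule.span ℂ {![(1:ℂ),1,1], ![lam,1,0]}
      rw [mem_L6]; simp)
  have hwlam : (![lam,1,0] : Fin 3 → ℂ) = lam • ![1,0,0] + ![0,1,0] := by
    funext i; fin_cases i <;> simp
  have hcw : C ![lam,1,0] = lam • C ![1,0,0] + C ![0,1,0] := by
    rw [hwlam, map_add, map_smul]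
  have hkey := mem_L6.mp hw6
  rw [hcw] at hkey
  simp only [Pi.add_apply, Pi.smul_apply, smul_eq_mul] at hkey
  rw [he1.1, he1.2, he2a, he2c, hab] at hkey
  -- hkey : lam * a + 0 = mu * (lam * 0 + a) + (1-mu) * (...)
  have : lam * a = mu * a := by linear_combination hkey
  exact hne (mul_right_cancel₀ hane this)

end Aux

/-- Each `π_λ` (λ ≠ 0, 1) is a representation of the primitive poset `(2,2,2)` and is
indecomposable, `π_λ ≇ π_μ` for `λ ≠ μ`, and in particular the poset `(2,2,2)` has
infinitely many pairwise non-isomorphic indecomposable representations. -/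
theorem poset222_infinite_family :
    (∀ lam : ℂ, piRep lam 0 ≤ piRep lam 1 ∧ piRep lam 2 ≤ piRep lam 3 ∧
      piRep lam 4 ≤ piRep lam 5) ∧
    (∀ lam : ℂ, lam ≠ 0 → lam ≠ 1 → IsIndecomposableSystem (piRep lam)) ∧
    (∀ lam mu : ℂ, lam ≠ 0 → lam ≠ 1 → mu ≠ 0 → mu ≠ 1 → lam ≠ mu →
      ¬ RepIso (piRep lam) (piRep mu)) ∧
    (∃ f : ℕ → (Fin 6 → Submodule ℂ (Fin 3 → ℂ)),
      (∀ n, f n 0 ≤ f n 1 ∧ f n 2 ≤ f n 3 ∧ f n 4 ≤ f n 5) ∧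
      (∀ n, IsIndecomposableSystem (f n)) ∧
      ∀ n m, n ≠ m → ¬ RepIso (f n) (f m)) := by
  have chains : ∀ lam : ℂ, piRep lam 0 ≤ piRep lam 1 ∧ piRep lam 2 ≤ piRep lam 3 ∧
      piRep lam 4 ≤ piRep lam 5 := by
    intro lam
    refine ⟨Submodule.span_mono ?_, Submodule.span_mono ?_, Submodule.span_mono ?_⟩
    · exact Set.singleton_subset_iff.mpr (Set.mem_insert _ _)
    · exact Set.singleton_subset_iff.mpr (Set.mem_insert_of_mem _ rfl)
    · exact Set.singleton_subset_iff.mpr (Set.mem_insert _ _)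
  refine ⟨chains, fun lam _ _ => piRep_indec lam,
    fun lam mu _ _ _ _ h => piRep_noniso h, ?_⟩
  refine ⟨fun n => piRep ((n : ℂ) + 2), fun n => chains _, fun n => piRep_indec _, ?_⟩
  intro n m hnm
  apply piRep_noniso
  intro h
  apply hnm
  exact_mod_cast add_right_cancel h
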